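/- There exists a constant C > 0 such that for every w ∈ B_θ and μ-almost every x ∈ Σ, |w(x)| ≤ C ‖w‖_θ; that is, the essential supremum norm is dominated by the ‖·‖_θ norm. -/

import Mathlib

open MeasureTheory Filter ENNReal

noncomputable section

/-- The left shift on one-sided sequences. -/
def shiftSeq {α : Type*} : (ℕ → α) → ℕ → α := fun x n => x (n + 1)

/-- The cylinder of length `n` centred at `x`. -/
def cyl {α : Type*} (x : ℕ → α) (n : ℕ) : Set (ℕ → α) := {y | ∀ i < n, y i = x i}

/-- `osc(w, m, x)`: the essential supremum of `|w(y) − w(z)|` over `y, z` in the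
cylinder `[x]_m` (with respect to `μ`). -/
def oscE {α : Type*} [MeasurableSpace α] (μ : Measure (ℕ → α))
    (w : (ℕ → α) → ℝ) (m : ℕ) (x : ℕ → α) : ℝ≥0∞ :=
  essSup (fun p : (ℕ → α) × (ℕ → α) => ENNReal.ofReal |w p.1 - w p.2|)
    ((μ.restrict (cyl x m)).prod (μ.restrict (cyl x m)))

/-- The seminorm `|w|_θ = sup_{m ≥ 1} θ^{-m} ∫ osc(w, m, ·) dμ`. -/
def thetaSemi {α : Type*} [MeasurableSpace α] (μ : Measure (ℕ → α)) (θ : ℝ)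
    (w : (ℕ → α) → ℝ) : ℝ≥0∞ :=
  ⨆ m : ℕ, ⨆ _ : 1 ≤ m, (ENNReal.ofReal θ ^ m)⁻¹ * ∫⁻ x, oscE μ w m x ∂μ

/-- The norm `‖w‖_θ = |w|_θ + ‖w‖_{L¹(μ)}`. -/
def thetaNorm {α : Type*} [MeasurableSpace α] (μ : Measure (ℕ → α)) (θ : ℝ)
    (w : (ℕ → α) → ℝ) : ℝ≥0∞ :=
  thetaSemi μ θ w + ∫⁻ x, ENNReal.ofReal |w x| ∂μ


/-- There is `C > 0` such that for every `w ∈ B_θ` one has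
`|w(x)| ≤ C ‖w‖_θ` for `μ`-a.e. `x`: the essential sup norm is dominated by `‖·‖_θ`.
(Every 1-cylinder is assumed to have positive measure.) -/
theorem sup_norm_le_thetaNorm {l : ℕ} (θ : ℝ) (hθ : 0 < θ) (hθ1 : θ < 1)
    (μ : Measure (ℕ → Fin l)) [IsProbabilityMeasure μ]
    (hone : ∀ a : Fin l, 0 < μ (cyl (fun _ => a) 1)) :
    ∃ C : ℝ, 0 < C ∧ ∀ w : (ℕ → Fin l) → ℝ, Measurable w →
      ∀ᵐ x ∂μ, ENNReal.ofReal |w x| ≤ ENNReal.ofReal C * thetaNorm μ θ w := by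
  -- l ≠ 0
  have hl : l ≠ 0 := by
    rintro rfl
    have h1 : μ Set.univ = 1 := measure_univ
    rw [Set.univ_eq_empty_iff.mpr ⟨fun x => (x 0).elim0⟩, measure_empty] at h1
    exact zero_ne_one h1
  haveI : NeZero l := ⟨hl⟩
  set C : Fin l → Set (ℕ → Fin l) := fun a => cyl (fun _ => a) 1 with hC
  have hCmem : ∀ a (y : ℕ → Fin l), y ∈ C a ↔ y 0 = a := by
    intro a y
    constructor
    · intro h; exact h 0 one_pos
    · intro h i hi; interval_cases i; exact h
  have hCeq : ∀ a, C a = (fun y : ℕ → Fin l => y 0) ⁻¹' {a} := by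
    intro a; ext y; simpa using hCmem a y
  have hCmeas : ∀ a, MeasurableSet (C a) := fun a => by
    rw [hCeq]; exact (measurable_pi_apply 0) (measurableSet_singleton a)
  obtain ⟨a0, ha0⟩ := Finite.exists_min fun a : Fin l => μ (C a)
  set c := μ (C a0) with hc
  have hcpos : 0 < c := hone a0
  have hcne : c ≠ 0 := hcpos.ne'
  have hcle : c ≤ 1 := prob_le_one
  have hcnetop : c ≠ ∞ := (lt_of_le_of_lt hcle one_lt_top).ne
  set d := c⁻¹ with hd
  have hdne : d ≠ ∞ := ENNReal.inv_ne_top.2 hcne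
  have hd1 : 1 ≤ d := ENNReal.one_le_inv.2 hcle
  have hdc : d * c = 1 := ENNReal.inv_mul_cancel hcne hcnetop
  refine ⟨(d * d).toReal + 1, by positivity, ?_⟩
  intro w hw
  set I := ∫⁻ x, ENNReal.ofReal |w x| ∂μ with hI
  set S := thetaSemi μ θ w with hS
  have hddK : d * d ≤ ENNReal.ofReal ((d * d).toReal + 1) := by
    calc d * d = ENNReal.ofReal ((d * d).toReal) := by
          rw [ENNReal.ofReal_toReal (ENNReal.mul_ne_top hdne hdne)]
      _ ≤ _ := ENNReal.ofReal_le_ofReal (by linarith [ENNReal.toReal_nonneg (a := d * d)])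
  set K := ENNReal.ofReal ((d * d).toReal + 1) * thetaNorm μ θ w with hK
  have key : ∀ a : Fin l, ∀ᵐ x ∂(μ.restrict (C a)), ENNReal.ofReal |w x| ≤ K := by
    intro a
    set O := oscE μ w 1 (fun _ => a) with hO
    have hcylx : ∀ x : ℕ → Fin l, x 0 = a → cyl x 1 = C a := by
      intro x hx; ext y
      constructor
      · intro h i hi; interval_cases i; rw [h 0 one_pos, hx]
      · intro h i hi; interval_cases i; rw [hCmem a y |>.mp h, ← hx]
    have hoscx : ∀ x : ℕ → Fin l, x 0 = a → oscE μ w 1 x = O := by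
      intro x hx
      simp only [oscE, hO]
      rw [hcylx x hx]
    -- O bounded via the integral of osc
    have h1 : O * μ (C a) ≤ ∫⁻ x, oscE μ w 1 x ∂μ := by
      calc O * μ (C a) = ∫⁻ _ in C a, O ∂μ := (setLIntegral_const _ _).symm
        _ = ∫⁻ x in C a, oscE μ w 1 x ∂μ := by
            refine (setLIntegral_congr_fun (hCmeas a) ?_).symm
            intro x hx
            exact hoscx x ((hCmem a x).mp hx)
        _ ≤ ∫⁻ x, oscE μ w 1 x ∂μ := lintegral_mono' Measure.restrict_le_self le_rfl
    have h2 : ∫⁻ x, oscE μ w 1 x ∂μ ≤ S := by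
      have hmem : (ENNReal.ofReal θ ^ 1)⁻¹ * ∫⁻ x, oscE μ w 1 x ∂μ ≤ S :=
        le_iSup_of_le 1 (le_iSup_of_le le_rfl le_rfl)
      have hθ0 : ENNReal.ofReal θ ≠ 0 := by
        simpa using (ENNReal.ofReal_pos.mpr hθ).ne'
      have hθ1' : ENNReal.ofReal θ ≤ 1 := by
        rw [← ENNReal.ofReal_one]; exact ENNReal.ofReal_le_ofReal hθ1.le
      calc ∫⁻ x, oscE μ w 1 x ∂μ
          = ENNReal.ofReal θ * ((ENNReal.ofReal θ ^ 1)⁻¹ * ∫⁻ x, oscE μ w 1 x ∂μ) := by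
            rw [pow_one, ← mul_assoc, ENNReal.mul_inv_cancel hθ0 ofReal_ne_top, one_mul]
        _ ≤ ENNReal.ofReal θ * S := mul_le_mul_right hmem _
        _ ≤ 1 * S := mul_le_mul_left hθ1' _
        _ = S := one_mul S
    have hOle : O ≤ d * S := by
      have hcO : c * O ≤ S := by
        calc c * O ≤ μ (C a) * O := mul_le_mul_left (ha0 a) O
          _ = O * μ (C a) := mul_comm _ _
          _ ≤ _ := h1.trans h2
      calc O = (d * c) * O := by rw [hdc, one_mul]
        _ = d * (c * O) := mul_assoc _ _ _
        _ ≤ d * S := mul_le_mul_right hcO d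
    -- a.e. bound from the essential sup
    have hae : ∀ᵐ p ∂((μ.restrict (C a)).prod (μ.restrict (C a))),
        ENNReal.ofReal |w p.1 - w p.2| ≤ O := by
      have := ENNReal.ae_le_essSup
        (f := fun p : (ℕ → Fin l) × (ℕ → Fin l) => ENNReal.ofReal |w p.1 - w p.2|)
        (μ := (μ.restrict (C a)).prod (μ.restrict (C a)))
      simpa only [hO, oscE, hC] using this
    have hae2 : ∀ᵐ y ∂(μ.restrict (C a)), ∀ᵐ z ∂(μ.restrict (C a)),
        ENNReal.ofReal |w y - w z| ≤ O := Measure.ae_ae_of_ae_prod hae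
    filter_upwards [hae2] with y hy
    set X := ENNReal.ofReal |w y| with hX
    have h3 : μ (C a) * X ≤ μ (C a) * O + I := by
      have hpt : ∀ᵐ z ∂(μ.restrict (C a)),
          X ≤ O + ENNReal.ofReal |w z| := by
        filter_upwards [hy] with z hz
        have habs : |w y| ≤ |w y - w z| + |w z| := by
          have := abs_sub_abs_le_abs_sub (w y) (w z); linarith
        calc X ≤ ENNReal.ofReal (|w y - w z| + |w z|) := ENNReal.ofReal_le_ofReal habs
          _ ≤ ENNReal.ofReal |w y - w z| + ENNReal.ofReal |w z| :=
              ENNReal.ofReal_add_le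
          _ ≤ O + ENNReal.ofReal |w z| := add_le_add_left hz _
      calc μ (C a) * X = X * μ (C a) := mul_comm _ _
        _ = ∫⁻ _ in C a, X ∂μ := (setLIntegral_const _ _).symm
        _ ≤ ∫⁻ z in C a, (O + ENNReal.ofReal |w z|) ∂μ := lintegral_mono_ae hpt
        _ = ∫⁻ _ in C a, O ∂μ + ∫⁻ z in C a, ENNReal.ofReal |w z| ∂μ :=
            lintegral_add_left measurable_const _
        _ ≤ O * μ (C a) + I := by
            gcongr
            · exact le_of_eq (setLIntegral_const _ _)
            · exact lintegral_mono' Measure.restrict_le_self le_rfl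
        _ = μ (C a) * O + I := by rw [mul_comm]
    have h4 : c * X ≤ O + I := by
      calc c * X ≤ μ (C a) * X := mul_le_mul_left (ha0 a) X
        _ ≤ μ (C a) * O + I := h3
        _ ≤ 1 * O + I := by gcongr; exact prob_le_one
        _ = O + I := by rw [one_mul]
    calc X = (d * c) * X := by rw [hdc, one_mul]
      _ = d * (c * X) := mul_assoc _ _ _
      _ ≤ d * (O + I) := mul_le_mul_right h4 d
      _ ≤ d * (d * S + d * I) := by
          have h5 : I ≤ d * I := le_mul_of_one_le_left zero_le hd1
          exact mul_le_mul_right (add_le_add hOle h5) d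
      _ = (d * d) * (S + I) := by ring
      _ ≤ K := by
          rw [hK]
          exact mul_le_mul' hddK le_rfl
  -- combine over the cylinders
  rw [ae_iff]
  set T := {x | ¬ ENNReal.ofReal |w x| ≤ K} with hT
  have hsub : T ⊆ ⋃ a, T ∩ C a := by
    intro x hx
    exact Set.mem_iUnion.2 ⟨x 0, hx, (hCmem (x 0) x).mpr rfl⟩
  have hzero : ∀ a : Fin l, μ (T ∩ C a) = 0 := by
    intro a
    have := ae_iff.mp (key a)
    rwa [Measure.restrict_apply' (hCmeas a)] at this
  refine le_antisymm ?_ zero_le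
  calc μ T ≤ ∑' a, μ (T ∩ C a) := (measure_mono hsub).trans (measure_iUnion_le _)
    _ = 0 := by simp [hzero]


end
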